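/- The map Φ̃ is a 2:1 cover ramified exactly over Γ, away from the eight tangent lines: for every (z, w) ∈ ℂ² with z ∉ {0, 1, λ} and w ∉ {0, 1, λ}, the set F(z, w) = { (b₀ : b₁ : b₂) ∈ ℙ²(ℂ) : (b₀t − b₁)(b₁² − b₀b₂) ≠ 0, (b₁t − b₂)/(b₀t − b₁) = z and −b₁(b₀λ − b₁λ − b₁ + b₂)/(b₁² − b₀b₂) = w } has exactly 2 elements if P_Γ(z, w) ≠ 0, and exactly 1 element if P_Γ(z, w) = 0. -/

import Mathlib

open scoped LinearAlgebra.Projectivization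

/-- The bidegree `(2,2)` polynomial `P_Γ(z, w)` defining the curve `Γ ⊂ ℙ¹×ℙ¹`. -/
noncomputable def PGamma (l t z w : ℂ) : ℂ :=
  t ^ 2 * z ^ 2 - 2 * t * z ^ 2 * w + t ^ 2 * w ^ 2 - 2 * t * z * w ^ 2 + z ^ 2 * w ^ 2
    - 2 * l * t * z - 2 * l * t * w + 2 * (2 * (l + 1) * t - t ^ 2 - l) * z * w + l ^ 2

/-- The fiber `F(z, w)` of `Φ̃` over an affine point `(z, w)`, consisting of the points
`(b₀ : b₁ : b₂) ∈ ℙ²(ℂ)` where both affine coordinates of `Φ̃` are defined and equal to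
`z` and `w` respectively. (Both defining conditions are invariant under rescaling the
representative, so this set of projective points is well defined.) -/
noncomputable def PhiFiber (l t z w : ℂ) : Set (ℙ ℂ (Fin 3 → ℂ)) :=
  {p | (p.rep 0 * t - p.rep 1 ≠ 0 ∧ p.rep 1 ^ 2 - p.rep 0 * p.rep 2 ≠ 0) ∧
    (p.rep 1 * t - p.rep 2) / (p.rep 0 * t - p.rep 1) = z ∧
    -(p.rep 1) * (p.rep 0 * l - p.rep 1 * l - p.rep 1 + p.rep 2) /
        (p.rep 1 ^ 2 - p.rep 0 * p.rep 2) = w}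

/-- `Φ̃` is a 2:1 cover ramified exactly over `Γ`, away from the eight tangent lines: for
every `(z, w) ∈ ℂ²` with `z ∉ {0, 1, λ}` and `w ∉ {0, 1, λ}`, the fiber `F(z, w)` has
exactly 2 elements if `P_Γ(z, w) ≠ 0` and exactly 1 element if `P_Γ(z, w) = 0`. -/
theorem phi_two_to_one_ramified_over_gamma (l t : ℂ) (hl0 : l ≠ 0) (hl1 : l ≠ 1)
    (ht0 : t ≠ 0) (ht1 : t ≠ 1) (htl : t ≠ l)
    (z w : ℂ) (hz : z ∉ ({0, 1, l} : Set ℂ)) (hw : w ∉ ({0, 1, l} : Set ℂ)) :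
    (PGamma l t z w ≠ 0 → (PhiFiber l t z w).ncard = 2) ∧
    (PGamma l t z w = 0 → (PhiFiber l t z w).ncard = 1) := by
  simp only [Set.mem_insert_iff, Set.mem_singleton_iff, not_or] at hz hw
  obtain ⟨hz0, hz1, hzl⟩ := hz
  obtain ⟨hw0, hw1, hwl⟩ := hw
  -- notation for the fiber quadratic
  have hAne : w * z * t ≠ 0 := by
    exact mul_ne_zero (mul_ne_zero hw0 hz0) ht0
  -- the candidate points
  have hvne : ∀ b : ℂ, (![b, 1, t + z - z * t * b] : Fin 3 → ℂ) ≠ 0 := by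
    intro b h
    have := congrFun h 1
    simp at this
  set φ : ℂ → ℙ ℂ (Fin 3 → ℂ) :=
    fun b => Projectivization.mk ℂ ![b, 1, t + z - z * t * b] (hvne b) with hφ
  set S : Set ℂ := {b : ℂ | (w * z * t) * b ^ 2 + (l - w * t - w * z - z * t) * b +
      (w + z + t - l - 1) = 0} with hS
  -- roots never make the first denominator vanish
  have hbt : ∀ b ∈ S, b * t - 1 ≠ 0 := by
    intro b hb h
    have hQ : (w * z * t) * b ^ 2 + (l - w * t - w * z - z * t) * b +
        (w + z + t - l - 1) = 0 := hb
    have : t * (t - 1) * (t - l) = 0 := by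
      linear_combination t ^ 2 * hQ -
        ((w * z * t) * t * b + (w * z * t) + (l - w * t - w * z - z * t) * t) * h
    rcases mul_eq_zero.1 this with h' | h'
    · rcases mul_eq_zero.1 h' with h'' | h''
      · exact ht0 h''
      · exact ht1 (by linear_combination h'')
    · exact htl (by linear_combination h')
  -- roots never make the second denominator vanish
  have hq2 : ∀ b ∈ S, z * t * b ^ 2 - (t + z) * b + 1 ≠ 0 := by
    intro b hb h
    have hQ : (w * z * t) * b ^ 2 + (l - w * t - w * z - z * t) * b +
        (w + z + t - l - 1) = 0 := hb
    have hE : (z - 1) * (z - l) * (t - 1) * (t - l) = 0 := by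
      linear_combination ((l - z * t) ^ 2 + w * (z * t * ((l + 1 - z - t) + (l - z * t) * b)
          - (t + z) * (l - z * t))) * h -
        (z * t * ((l + 1 - z - t) + (l - z * t) * b) - (t + z) * (l - z * t)) * hQ
    rcases mul_eq_zero.1 hE with h' | h'
    · rcases mul_eq_zero.1 h' with h'' | h''
      · rcases mul_eq_zero.1 h'' with h3 | h3
        · exact hz1 (by linear_combination h3)
        · exact hzl (by linear_combination h3)
      · exact ht1 (by linear_combination h'')
    · exact htl (by linear_combination h')
  -- the fiber is the image of the root set
  have key : PhiFiber l t z w = φ '' S := by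
    ext p
    constructor
    · rintro ⟨⟨hd1, hd2⟩, h1, h2⟩
      have hb1 : p.rep 1 ≠ 0 := by
        intro h
        rw [h] at h2
        simp at h2
        exact hw0 h2.symm
      set b0 := p.rep 0
      set b1 := p.rep 1
      set b2 := p.rep 2
      have e1 : b1 * t - b2 = z * (b0 * t - b1) := (div_eq_iff hd1).1 h1
      have e2 : -b1 * (b0 * l - b1 * l - b1 + b2) = w * (b1 ^ 2 - b0 * b2) :=
        (div_eq_iff hd2).1 h2
      refine ⟨b0 / b1, ?_, ?_⟩
      · show (w * z * t) * (b0 / b1) ^ 2 + (l - w * t - w * z - z * t) * (b0 / b1) +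
            (w + z + t - l - 1) = 0
        have hG : w * z * t * b0 ^ 2 + (l - w * t - w * z - z * t) * (b0 * b1) +
            (w + z + t - l - 1) * b1 ^ 2 = 0 := by
          linear_combination -e2 + (b1 - w * b0) * e1
        have hrw : (w * z * t) * (b0 / b1) ^ 2 + (l - w * t - w * z - z * t) * (b0 / b1) +
            (w + z + t - l - 1) = (w * z * t * b0 ^ 2 + (l - w * t - w * z - z * t) * (b0 * b1) +
            (w + z + t - l - 1) * b1 ^ 2) / b1 ^ 2 := by
          rw [eq_div_iff (pow_ne_zero 2 hb1)]
          field_simp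
        rw [hrw, hG, zero_div]
      · rw [hφ]
        conv_rhs => rw [← p.mk_rep]
        rw [Projectivization.mk_eq_mk_iff']
        refine ⟨b1⁻¹, ?_⟩
        funext i
        fin_cases i <;>
          simp only [Pi.smul_apply, smul_eq_mul, Matrix.cons_val_zero, Matrix.cons_val_one,
            Matrix.head_cons, Matrix.cons_val_two, Matrix.tail_cons]
        · show b1⁻¹ * b0 = b0 / b1
          rw [div_eq_inv_mul]
        · show b1⁻¹ * b1 = 1
          exact inv_mul_cancel₀ hb1
        · show b1⁻¹ * b2 = t + z - z * t * (b0 / b1)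
          field_simp
          linear_combination -e1
    · rintro ⟨b, hb, rfl⟩
      obtain ⟨a, ha⟩ :=
        Projectivization.exists_smul_eq_mk_rep ℂ (![b, 1, t + z - z * t * b]) (hvne b)
      have r0 : (φ b).rep 0 = (a : ℂ) * b := by
        rw [hφ, ← ha]; simp [Units.smul_def]
      have r1 : (φ b).rep 1 = (a : ℂ) := by
        rw [hφ, ← ha]; simp [Units.smul_def]
      have r2 : (φ b).rep 2 = (a : ℂ) * (t + z - z * t * b) := by
        rw [hφ, ← ha]; simp [Units.smul_def]
      have haz : (a : ℂ) ≠ 0 := a.ne_zero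
      have hd1 : (φ b).rep 0 * t - (φ b).rep 1 ≠ 0 := by
        rw [r0, r1]
        intro h
        have h' : (a : ℂ) * (b * t - 1) = 0 := by linear_combination h
        rcases mul_eq_zero.1 h' with h'' | h''
        · exact haz h''
        · exact hbt b hb h''
      have hd2 : (φ b).rep 1 ^ 2 - (φ b).rep 0 * (φ b).rep 2 ≠ 0 := by
        rw [r0, r1, r2]
        intro h
        apply hq2 b hb
        have h' : (a : ℂ) ^ 2 * (z * t * b ^ 2 - (t + z) * b + 1) = 0 := by
          linear_combination h
        rcases mul_eq_zero.1 h' with h'' | h''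
        · exact absurd (pow_eq_zero_iff (n := 2) (by norm_num) |>.1 h'') haz
        · exact absurd h'' (hq2 b hb)
      refine ⟨⟨hd1, hd2⟩, ?_, ?_⟩
      · rw [div_eq_iff hd1, r0, r1, r2]
        ring
      · rw [div_eq_iff hd2, r0, r1, r2]
        have hQ : (w * z * t) * b ^ 2 + (l - w * t - w * z - z * t) * b +
            (w + z + t - l - 1) = 0 := hb
        linear_combination (-(a : ℂ) ^ 2) * hQ
  -- φ is injective
  have hinj : Function.Injective φ := by
    intro b b' h
    rw [hφ, Projectivization.mk_eq_mk_iff] at h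
    obtain ⟨c, hc⟩ := h
    have h1 := congrFun hc 1
    have h0 := congrFun hc 0
    simp only [Pi.smul_apply, Matrix.cons_val_one, Matrix.head_cons, Matrix.cons_val_zero,
      Units.smul_def, smul_eq_mul, mul_one] at h1 h0
    rw [h1] at h0
    simpa using h0.symm
  have hcard : (PhiFiber l t z w).ncard = S.ncard := by
    rw [key, Set.ncard_image_of_injective S hinj]
  -- compute the root set via the discriminant
  obtain ⟨s, hs⟩ := IsAlgClosed.exists_pow_nat_eq (k := ℂ) (PGamma l t z w) (n := 2) (by norm_num)
  have hdisc : discrim (w * z * t) (l - w * t - w * z - z * t) (w + z + t - l - 1) = s * s := by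
    have h1 : discrim (w * z * t) (l - w * t - w * z - z * t) (w + z + t - l - 1)
        = PGamma l t z w := by
      unfold discrim PGamma
      ring
    rw [h1, ← hs]
    ring
  have hSroots : S = {(-(l - w * t - w * z - z * t) + s) / (2 * (w * z * t)),
      (-(l - w * t - w * z - z * t) - s) / (2 * (w * z * t))} := by
    ext x
    have h2 := quadratic_eq_zero_iff hAne hdisc x
    simp only [hS, Set.mem_setOf_eq, Set.mem_insert_iff, Set.mem_singleton_iff]
    rw [← h2]
    constructor <;> intro hx <;> linear_combination hx
  constructor
  · intro hPG
    have hsne : s ≠ 0 := by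
      intro h
      rw [h] at hs
      exact hPG (by simpa using hs.symm)
    rw [hcard, hSroots, Set.ncard_pair]
    intro h
    rw [div_eq_div_iff (by simpa using mul_ne_zero two_ne_zero hAne)
      (by simpa using mul_ne_zero two_ne_zero hAne)] at h
    apply hsne
    have h2A : (2 : ℂ) * (w * z * t) ≠ 0 := mul_ne_zero two_ne_zero hAne
    have : s * (2 * (w * z * t)) = 0 := by linear_combination h / 2
    rcases mul_eq_zero.1 this with h' | h'
    · exact h'
    · exact absurd h' h2A
  · intro hPG
    have hs0 : s = 0 := by
      have : s ^ 2 = 0 := by rw [hs]; exact hPG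
      exact pow_eq_zero_iff (by norm_num) |>.1 this
    rw [hcard, hSroots, hs0]
    simp
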